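/- arXiv:1403.7254 — 7 statements merged into one kernel-verified Lean document; each statement's English description precedes it below -/
import Mathlib

section
/- Let A be an m×m real symmetric positive definite matrix, b ∈ ℝ^m, q(x) = ½xᵀAx − xᵀb, x ∈ ℝ^m, g = Ax − b, and let π₁,…,π_{n̂} be the block projections of a partition of {1,…,m}. Define D_n = ⟨g, π_n(g)⟩ and H_{n,m'} = ⟨π_n(g), A π_{m'}(g)⟩. Then H is symmetric positive semidefinite; moreover, if π_n(g) ≠ 0 for every n, then H is positive definite and Θ* = −H⁻¹D is the unique minimizer over ℝ^{n̂} of Φ(Θ) = q(x + Σ_n θ_n π_n(g)). -/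
open Matrix

/-- The quadratic form `q(x) = ½ xᵀAx − xᵀb`. -/
noncomputable def quadForm {m : ℕ} (A : Matrix (Fin m) (Fin m) ℝ) (b x : Fin m → ℝ) : ℝ :=
  (1 / 2 : ℝ) * (x ⬝ᵥ A.mulVec x) - x ⬝ᵥ b

/-- Block projection associated with the partition of `Fin m` given by the fibers of
`P : Fin m → Fin nh`. -/
def blockProj {m nh : ℕ} (P : Fin m → Fin nh) (k : Fin nh) (x : Fin m → ℝ) : Fin m → ℝ :=
  fun i => if P i = k then x i else 0

/-- The Gram–Hessian matrix `H_{n,m'} = ⟨πₙ(g), A π_{m'}(g)⟩` is symmetric positive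
semidefinite; if moreover `πₙ(g) ≠ 0` for every `n`, then `H` is positive definite and
`Θ* = −H⁻¹ D` is the unique minimizer of `Φ(Θ) = q(x + Σₙ θₙ πₙ(g))` over `ℝ^n̂`. -/
theorem stmt_2 {m nh : ℕ} (A : Matrix (Fin m) (Fin m) ℝ) (hA : A.PosDef)
    (b x : Fin m → ℝ)
    (P : Fin m → Fin nh) (hP : Function.Surjective P)
    (g : Fin m → ℝ) (hg : g = A.mulVec x - b)
    (D : Fin nh → ℝ) (hD : ∀ n, D n = g ⬝ᵥ blockProj P n g)
    (H : Matrix (Fin nh) (Fin nh) ℝ)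
    (hH : ∀ n m', H n m' = blockProj P n g ⬝ᵥ A.mulVec (blockProj P m' g)) :
    H.IsSymm ∧ H.PosSemidef ∧
      ((∀ n, blockProj P n g ≠ 0) →
        H.PosDef ∧
          ∀ Θ : Fin nh → ℝ, Θ ≠ -(H⁻¹.mulVec D) →
            quadForm A b (x + ∑ n, (-(H⁻¹.mulVec D)) n • blockProj P n g)
              < quadForm A b (x + ∑ n, Θ n • blockProj P n g)) := by
  
  -- A is symmetric entrywise
  have hAs : ∀ i j, A i j = A j i := fun i j => by simpa using hA.1.apply j i
  -- symmetry of the bilinear form of A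
  have hsym : ∀ u v : Fin m → ℝ, u ⬝ᵥ A.mulVec v = v ⬝ᵥ A.mulVec u := by
    intro u v
    simp only [dotProduct, mulVec, Finset.mul_sum]
    rw [Finset.sum_comm]
    refine Finset.sum_congr rfl fun i _ => Finset.sum_congr rfl fun j _ => ?_
    rw [hAs]; ring
  -- closed form for the weighted sums
  set w : (Fin nh → ℝ) → (Fin m → ℝ) := fun c i => c (P i) * g i with hwdef
  have hw : ∀ c : Fin nh → ℝ, (∑ n, c n • blockProj P n g) = w c := by
    intro c; funext i
    simp only [Finset.sum_apply, Pi.smul_apply, blockProj, smul_eq_mul, mul_ite, mul_zero]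
    rw [Finset.sum_ite_eq]
    simp [hwdef]
  -- key linearity identity
  have key : ∀ (c : Fin nh → ℝ) (v : Fin m → ℝ),
      (∑ n, c n * (blockProj P n g ⬝ᵥ v)) = w c ⬝ᵥ v := by
    intro c v
    simp only [dotProduct, blockProj, Finset.mul_sum, ite_mul, zero_mul, mul_ite, mul_zero]
    rw [Finset.sum_comm]
    refine Finset.sum_congr rfl fun i _ => ?_
    rw [Finset.sum_ite_eq]
    simp [hwdef, mul_assoc]
  -- D against c
  have hDc : ∀ c : Fin nh → ℝ, D ⬝ᵥ c = g ⬝ᵥ w c := by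
    intro c
    rw [dotProduct_comm g (w c), ← key c g]
    simp only [dotProduct]
    refine Finset.sum_congr rfl fun n _ => ?_
    rw [hD, dotProduct_comm]
    simp only [dotProduct]; ring
  -- H against c, c'
  have hHc : ∀ c c' : Fin nh → ℝ, c ⬝ᵥ H.mulVec c' = w c ⬝ᵥ A.mulVec (w c') := by
    intro c c'
    have inner : ∀ n, (H.mulVec c') n = blockProj P n g ⬝ᵥ A.mulVec (w c') := by
      intro n
      rw [hsym]
      rw [← key c' (A.mulVec (blockProj P n g))]
      simp only [mulVec, dotProduct]
      refine Finset.sum_congr rfl fun m' _ => ?_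
      rw [hH, hsym]
      simp only [dotProduct, mulVec]; ring
    rw [← key c (A.mulVec (w c'))]
    simp only [dotProduct]
    refine Finset.sum_congr rfl fun n _ => ?_
    rw [inner]
    simp only [dotProduct]
  -- expansion of the quadratic form
  have hexp : ∀ v : Fin m → ℝ, quadForm A b (x + v)
      = quadForm A b x + g ⬝ᵥ v + (1/2 : ℝ) * (v ⬝ᵥ A.mulVec v) := by
    intro v
    simp only [quadForm, hg, mulVec_add, dotProduct_add, add_dotProduct, sub_dotProduct,
      dotProduct_sub]
    rw [hsym x v, dotProduct_comm (A.mulVec x) v, dotProduct_comm b v]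
    ring
  have hPhi : ∀ c : Fin nh → ℝ, quadForm A b (x + ∑ n, c n • blockProj P n g)
      = quadForm A b x + D ⬝ᵥ c + (1/2 : ℝ) * (c ⬝ᵥ H.mulVec c) := by
    intro c
    rw [hw, hexp, hDc, hHc]
  -- symmetry of H
  have hHsymm : H.IsSymm := by
    ext n m'
    simp only [Matrix.transpose_apply]
    rw [hH, hH, hsym]
  refine ⟨hHsymm, ?_, ?_⟩
  · refine Matrix.PosSemidef.of_dotProduct_mulVec_nonneg ?_ ?_
    · exact Matrix.isHermitian_iff_isSymm.mpr hHsymm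
    · intro c
      have h0 := hA.posSemidef.dotProduct_mulVec_nonneg (w (fun n => c n))
      have : c ⬝ᵥ H.mulVec c = w c ⬝ᵥ A.mulVec (w c) := hHc c c
      simpa [this] using h0
  · intro hgnz
    have hwne : ∀ c : Fin nh → ℝ, c ≠ 0 → w c ≠ 0 := by
      intro c hc
      obtain ⟨n, hn⟩ := Function.ne_iff.mp hc
      obtain ⟨i, hi⟩ := Function.ne_iff.mp (hgnz n)
      simp only [blockProj, Pi.zero_apply] at hi
      have hPi : P i = n := by by_contra h; simp [h] at hi
      have hgi : g i ≠ 0 := by simpa [hPi] using hi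
      intro h
      have := congrFun h i
      simp only [hwdef, Pi.zero_apply] at this
      rw [hPi] at this
      exact (mul_ne_zero hn hgi) this
    have hHpd : H.PosDef := by
      refine Matrix.PosDef.of_dotProduct_mulVec_pos (Matrix.isHermitian_iff_isSymm.mpr hHsymm) ?_
      intro c hc
      have h0 := hA.dotProduct_mulVec_pos (hwne c hc)
      have : c ⬝ᵥ H.mulVec c = w c ⬝ᵥ A.mulVec (w c) := hHc c c
      simpa [this] using h0
    refine ⟨hHpd, ?_⟩
    have hdet : IsUnit H.det := isUnit_iff_ne_zero.mpr (ne_of_gt hHpd.det_pos)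
    set Θs : Fin nh → ℝ := -(H⁻¹.mulVec D) with hΘs
    have hHΘs : H.mulVec Θs = -D := by
      rw [hΘs, Matrix.mulVec_neg, Matrix.mulVec_mulVec, Matrix.mul_nonsing_inv _ hdet,
        Matrix.one_mulVec]
    -- symmetry of dot against H
    have hsymH : ∀ u v : Fin nh → ℝ, u ⬝ᵥ H.mulVec v = v ⬝ᵥ H.mulVec u := by
      intro u v
      have hHs : ∀ i j, H i j = H j i := by
        intro i j
        rw [hH, hH, hsym]
      simp only [dotProduct, mulVec, Finset.mul_sum]
      rw [Finset.sum_comm]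
      refine Finset.sum_congr rfl fun i _ => Finset.sum_congr rfl fun j _ => ?_
      rw [hHs]; ring
    intro Θ hΘ
    rw [hPhi, hPhi]
    set d : Fin nh → ℝ := Θ - Θs with hd
    have hdne : d ≠ 0 := sub_ne_zero.mpr hΘ
    have hdpos : 0 < d ⬝ᵥ H.mulVec d := by
      have := hHpd.dotProduct_mulVec_pos hdne
      simpa using this
    have hΘd : Θ = Θs + d := by rw [hd]; ring
    have hexp2 : Θ ⬝ᵥ H.mulVec Θ
        = Θs ⬝ᵥ H.mulVec Θs + 2 * (Θs ⬝ᵥ H.mulVec d) + d ⬝ᵥ H.mulVec d := by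
      rw [hΘd]
      simp only [mulVec_add, dotProduct_add, add_dotProduct]
      rw [hsymH d Θs]; ring
    have hDd : D ⬝ᵥ Θ - D ⬝ᵥ Θs = -(Θs ⬝ᵥ H.mulVec d) := by
      have h1 : D ⬝ᵥ Θ - D ⬝ᵥ Θs = D ⬝ᵥ d := by
        rw [hd, dotProduct_sub]
      have hDeq : D = -(H.mulVec Θs) := by rw [hHΘs, neg_neg]
      rw [h1, hDeq, neg_dotProduct, dotProduct_comm, hsymH]
    linarith
end

section
/- Let A be an m×m real symmetric positive definite matrix, b ∈ ℝ^m, q(x) = ½xᵀAx − xᵀb, x ∈ ℝ^m, and g = Ax − b. Let P and Q be two partitions of {1,…,m} into nonempty blocks such that P refines Q (every block of Q is a union of blocks of P). For a partition R with blocks R₁,…,R_r and block projections π^R_1,…,π^R_r, set Φ_R(Θ) = q(x + Σ_{n=1}^{r} θ_n π^R_n(g)) for Θ ∈ ℝ^r. Then inf over Θ ∈ ℝ^{|P|} of Φ_P(Θ) ≤ inf over Θ ∈ ℝ^{|Q|} of Φ_Q(Θ). -/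
open Matrix

lemma quadForm_bddBelow {m : ℕ} (A : Matrix (Fin m) (Fin m) ℝ) (hA : A.PosDef)
    (b : Fin m → ℝ) (y : Fin m → ℝ) :
    quadForm A b (A⁻¹.mulVec b) ≤ quadForm A b y := by
  set z := A⁻¹.mulVec b with hz
  have hAz : A.mulVec z = b := by
    rw [hz, Matrix.mulVec_mulVec, Matrix.mul_nonsing_inv _ hA.det_pos.ne'.isUnit, Matrix.one_mulVec]
  have hsymm : Aᵀ = A := by
    have := hA.isHermitian
    simpa [Matrix.IsHermitian, Matrix.conjTranspose_eq_transpose_of_trivial] using this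
  have hswap : ∀ v w : Fin m → ℝ, v ⬝ᵥ A.mulVec w = A.mulVec v ⬝ᵥ w := by
    intro v w
    rw [Matrix.dotProduct_mulVec, ← Matrix.mulVec_transpose, hsymm]
  have hpos : 0 ≤ (y - z) ⬝ᵥ A.mulVec (y - z) := by
    have := hA.posSemidef.dotProduct_mulVec_nonneg (y - z)
    simpa using this
  have hexp : (y - z) ⬝ᵥ A.mulVec (y - z)
      = y ⬝ᵥ A.mulVec y - 2 * (y ⬝ᵥ b) + z ⬝ᵥ b := by
    rw [Matrix.mulVec_sub, sub_dotProduct, dotProduct_sub,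
      dotProduct_sub, hAz]
    have h1 : z ⬝ᵥ A.mulVec y = y ⬝ᵥ b := by
      rw [hswap, hAz, dotProduct_comm]
    rw [h1]
    ring
  unfold quadForm
  rw [hAz]
  nlinarith [hpos, hexp]

/-- If the partition `P` refines the partition `Q` (every block of `Q` is a union of blocks
of `P`), then the infimum of the blockwise line-search function for `P` is at most that
for `Q`. -/
theorem stmt_3 {m p qn : ℕ} (A : Matrix (Fin m) (Fin m) ℝ) (hA : A.PosDef)
    (b x : Fin m → ℝ) (g : Fin m → ℝ) (hg : g = A.mulVec x - b)
    (P : Fin m → Fin p) (hP : Function.Surjective P)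
    (Q : Fin m → Fin qn) (hQ : Function.Surjective Q)
    (href : ∀ i j : Fin m, P i = P j → Q i = Q j) :
    (⨅ Θ : Fin p → ℝ, quadForm A b (x + ∑ n, Θ n • blockProj P n g))
      ≤ ⨅ Θ : Fin qn → ℝ, quadForm A b (x + ∑ n, Θ n • blockProj Q n g) := by
  have hbdd : BddBelow (Set.range fun Θ : Fin p → ℝ =>
      quadForm A b (x + ∑ n, Θ n • blockProj P n g)) := by
    refine ⟨quadForm A b (A⁻¹.mulVec b), ?_⟩
    rintro _ ⟨Θ, rfl⟩
    exact quadForm_bddBelow A hA b _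
  refine le_ciInf fun Θ => ?_
  set Θ' : Fin p → ℝ := fun k => Θ (Q (Function.surjInv hP k)) with hΘ'
  have hsum : (∑ n, Θ' n • blockProj P n g) = ∑ n, Θ n • blockProj Q n g := by
    funext i
    rw [Finset.sum_apply, Finset.sum_apply]
    have hL : ∀ n : Fin p, (Θ' n • blockProj P n g) i
        = if P i = n then Θ' n * g i else 0 := by
      intro n; simp [blockProj, mul_ite]
    have hR : ∀ n : Fin qn, (Θ n • blockProj Q n g) i
        = if Q i = n then Θ n * g i else 0 := by
      intro n; simp [blockProj, mul_ite]
    simp only [hL, hR, Finset.sum_ite_eq, Finset.mem_univ, if_true]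
    have : Q (Function.surjInv hP (P i)) = Q i :=
      href _ _ (Function.surjInv_eq hP (P i))
    rw [hΘ']
    simp [this]
  calc (⨅ Θ : Fin p → ℝ, quadForm A b (x + ∑ n, Θ n • blockProj P n g))
      ≤ quadForm A b (x + ∑ n, Θ' n • blockProj P n g) := ciInf_le hbdd Θ'
    _ = quadForm A b (x + ∑ n, Θ n • blockProj Q n g) := by rw [hsum]
end

section
/- Let A be an m×m real symmetric positive definite matrix, b ∈ ℝ^m, q(x) = ½xᵀAx − xᵀb, x ∈ ℝ^m, g = Ax − b, and let π₁,…,π_{n̂} be the block projections of a partition of {1,…,m} with π_n(g) ≠ 0 for all n. With D_n = ⟨g, π_n(g)⟩, H_{n,m'} = ⟨π_n(g), A π_{m'}(g)⟩, Θ* = −H⁻¹D, and x⁺ = x + Σ_n θ*_n π_n(g), one has the exact decrease identity q(x) − q(x⁺) = ½ Dᵀ H⁻¹ D. -/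
open Matrix

lemma sum_smul_blockProj {m nh : ℕ} (P : Fin m → Fin nh) (g : Fin m → ℝ) (c : Fin nh → ℝ) :
    (∑ n, c n • blockProj P n g) = fun i => c (P i) * g i := by
  funext i
  simp only [Finset.sum_apply, Pi.smul_apply, blockProj, smul_eq_mul, mul_ite, mul_zero]
  simp [Finset.sum_ite_eq]

lemma mulVec_sum' {m nh : ℕ} (A : Matrix (Fin m) (Fin m) ℝ) (f : Fin nh → Fin m → ℝ) :
    A.mulVec (∑ n, f n) = ∑ n, A.mulVec (f n) := by
  simp only [← Matrix.mulVecLin_apply, map_sum]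

lemma dotProduct_sum' {m nh : ℕ} (u : Fin m → ℝ) (f : Fin nh → Fin m → ℝ) :
    u ⬝ᵥ (∑ n, f n) = ∑ n, u ⬝ᵥ f n := by
  simp only [dotProduct, Finset.sum_apply, Finset.mul_sum]
  exact Finset.sum_comm

lemma sum_dotProduct' {m nh : ℕ} (u : Fin m → ℝ) (f : Fin nh → Fin m → ℝ) :
    (∑ n, f n) ⬝ᵥ u = ∑ n, f n ⬝ᵥ u := by
  simp only [dotProduct_comm _ u, dotProduct_sum']

/-- Exact decrease identity `q(x) − q(x⁺) = ½ Dᵀ H⁻¹ D` for the enhanced steepest-descent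
update `x⁺ = x + Σₙ θ*ₙ πₙ(g)` with `Θ* = −H⁻¹ D`. -/
theorem stmt_4 {m nh : ℕ} (A : Matrix (Fin m) (Fin m) ℝ) (hA : A.PosDef)
    (b x : Fin m → ℝ)
    (P : Fin m → Fin nh) (hP : Function.Surjective P)
    (g : Fin m → ℝ) (hg : g = A.mulVec x - b)
    (hnz : ∀ n, blockProj P n g ≠ 0)
    (D : Fin nh → ℝ) (hD : ∀ n, D n = g ⬝ᵥ blockProj P n g)
    (H : Matrix (Fin nh) (Fin nh) ℝ)
    (hH : ∀ n m', H n m' = blockProj P n g ⬝ᵥ A.mulVec (blockProj P m' g))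
    (Θs : Fin nh → ℝ) (hΘs : Θs = -(H⁻¹.mulVec D))
    (xp : Fin m → ℝ) (hxp : xp = x + ∑ n, Θs n • blockProj P n g) :
    quadForm A b x - quadForm A b xp = (1 / 2 : ℝ) * (D ⬝ᵥ H⁻¹.mulVec D) := by
  -- symmetry of A as a bilinear form
  have hAsym : ∀ u v : Fin m → ℝ, u ⬝ᵥ A.mulVec v = v ⬝ᵥ A.mulVec u := by
    intro u v
    rw [Matrix.dotProduct_mulVec, ← Matrix.mulVec_transpose]
    rw [show Aᵀ = A from hA.isHermitian, dotProduct_comm]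
  -- the bilinear form of H is that of A on the block sums
  have hquad : ∀ v w : Fin nh → ℝ,
      v ⬝ᵥ H.mulVec w =
        (∑ n, v n • blockProj P n g) ⬝ᵥ A.mulVec (∑ n, w n • blockProj P n g) := by
    intro v w
    have hmv : A.mulVec (∑ n, w n • blockProj P n g)
        = ∑ n, w n • A.mulVec (blockProj P n g) := by
      rw [mulVec_sum']
      exact congrArg (Finset.sum _) (funext fun n => Matrix.mulVec_smul A (w n) _)
    rw [hmv, sum_dotProduct']
    refine Eq.symm ?_
    have : ∀ n, (v n • blockProj P n g) ⬝ᵥ (∑ k, w k • A.mulVec (blockProj P k g))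
        = v n * ∑ k, H n k * w k := by
      intro n
      rw [smul_dotProduct, dotProduct_sum']
      simp only [dotProduct_smul, smul_eq_mul, hH, Finset.mul_sum]
      exact Finset.sum_congr rfl fun k _ => by ring
    simp only [this]
    simp only [dotProduct, Matrix.mulVec]
  -- H is positive definite
  have hHsym : H.IsHermitian := by
    refine Matrix.ext fun n k => ?_
    simp only [Matrix.conjTranspose_apply, star_trivial, hH]
    exact hAsym _ _
  have hPD : H.PosDef := by
    refine Matrix.PosDef.of_dotProduct_mulVec_pos hHsym (fun v hv => ?_)
    have hsv : star v = v := by funext i; simp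
    rw [hsv, hquad v v]
    have hsnz : (∑ n, v n • blockProj P n g) ≠ 0 := by
      intro h0
      rw [sum_smul_blockProj] at h0
      obtain ⟨n, hn⟩ := Function.ne_iff.mp hv
      refine hnz n ?_
      funext i
      simp only [blockProj, Pi.zero_apply]
      split_ifs with hi
      · have := congrFun h0 i
        simp only [Pi.zero_apply] at this
        rw [hi] at this
        exact (mul_eq_zero.mp this).resolve_left hn
      · rfl
    have := hA.dotProduct_mulVec_pos hsnz
    rwa [show star (∑ n, v n • blockProj P n g) = ∑ n, v n • blockProj P n g from
      funext fun i => by simp] at this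
  have hdet : IsUnit H.det := (Matrix.isUnit_iff_isUnit_det H).mp hPD.isUnit
  have hHmul : H * H⁻¹ = 1 := Matrix.mul_nonsing_inv H hdet
  have hHΘ : H.mulVec Θs = -D := by
    rw [hΘs, Matrix.mulVec_neg, Matrix.mulVec_mulVec, hHmul, Matrix.one_mulVec]
  have hΘD : Θs ⬝ᵥ D = -(D ⬝ᵥ H⁻¹.mulVec D) := by
    rw [hΘs, neg_dotProduct, dotProduct_comm]
  -- abbreviate the step
  set s : Fin m → ℝ := ∑ n, Θs n • blockProj P n g with hs
  have hsg : s ⬝ᵥ g = Θs ⬝ᵥ D := by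
    rw [hs, sum_dotProduct']
    simp only [smul_dotProduct, smul_eq_mul]
    exact Finset.sum_congr rfl fun n _ => by
      rw [hD n, dotProduct_comm]
  have hsAs : s ⬝ᵥ A.mulVec s = -(Θs ⬝ᵥ D) := by
    rw [hs, ← hquad, hHΘ, dotProduct_neg]
  have hexp : quadForm A b x - quadForm A b xp
      = -(s ⬝ᵥ g) - (1 / 2 : ℝ) * (s ⬝ᵥ A.mulVec s) := by
    rw [hxp, hg]
    simp only [quadForm, Matrix.mulVec_add, dotProduct_add, add_dotProduct,
      dotProduct_sub]
    rw [hAsym x s]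
    ring
  rw [hexp, hsg, hsAs, hΘD]
  ring
end

section
/- Let A be an m×m real symmetric positive definite matrix, b ∈ ℝ^m, q(x) = ½xᵀAx − xᵀb, x ∈ ℝ^m, g = Ax − b, and let π₁,…,π_{n̂} be the block projections of a partition of {1,…,m} with π_n(g) ≠ 0 for all n. With D_n = ⟨g, π_n(g)⟩ and H_{n,m'} = ⟨π_n(g), A π_{m'}(g)⟩ (so H is symmetric positive definite), one has Dᵀ H⁻¹ D ≥ ‖g‖₂⁴ / (κ(H) · ⟨g, Ag⟩), where κ(H) = λ_max(H)/λ_min(H) is the spectral condition number of H. -/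
open Matrix

/-- Spectral condition number `κ(M) = λ_max(M) / λ_min(M)` of a symmetric real matrix
(junk value `0` if `M` is not symmetric). -/
noncomputable def condNumber {n : ℕ} (M : Matrix (Fin n) (Fin n) ℝ) : ℝ :=
  letI := Classical.propDecidable M.IsHermitian
  if h : M.IsHermitian then (⨆ i, h.eigenvalues i) / (⨅ i, h.eigenvalues i) else 0

/-- Cauchy–Schwarz for a positive semidefinite real matrix. -/
lemma psd_cs {n : ℕ} {H : Matrix (Fin n) (Fin n) ℝ} (hH : H.PosSemidef)
    (u v : Fin n → ℝ) : (u ⬝ᵥ H *ᵥ v) ^ 2 ≤ (u ⬝ᵥ H *ᵥ u) * (v ⬝ᵥ H *ᵥ v) := by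
  have hsym : ∀ a c : Fin n → ℝ, a ⬝ᵥ H *ᵥ c = c ⬝ᵥ H *ᵥ a := by
    intro a c
    have hT : Hᵀ = H := hH.1
    rw [dotProduct_mulVec, ← mulVec_transpose, hT, dotProduct_comm]
  have key := discrim_le_zero (a := v ⬝ᵥ H *ᵥ v) (b := 2 * (u ⬝ᵥ H *ᵥ v))
      (c := u ⬝ᵥ H *ᵥ u) ?_
  · rw [discrim] at key
    nlinarith [key]
  · intro t
    have h0 := hH.dotProduct_mulVec_nonneg (u + t • v)
    simp only [star_trivial] at h0
    have hexp : (u + t • v) ⬝ᵥ H *ᵥ (u + t • v)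
        = (v ⬝ᵥ H *ᵥ v) * (t * t) + 2 * (u ⬝ᵥ H *ᵥ v) * t + u ⬝ᵥ H *ᵥ u := by
      simp only [mulVec_add, dotProduct_add, add_dotProduct, mulVec_smul, dotProduct_smul,
        smul_dotProduct, smul_eq_mul]
      rw [hsym v u]
      ring
    linarith [hexp ▸ h0]

/-- Lower bound `Dᵀ H⁻¹ D ≥ ‖g‖₂⁴ / (κ(H) ⟨g, A g⟩)` for the Jacobian vector `D` and the
Gram–Hessian matrix `H` of the blockwise line-search. -/
theorem stmt_5 {m nh : ℕ} (A : Matrix (Fin m) (Fin m) ℝ) (hA : A.PosDef)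
    (b x : Fin m → ℝ)
    (P : Fin m → Fin nh) (hP : Function.Surjective P)
    (g : Fin m → ℝ) (hg : g = A.mulVec x - b)
    (hnz : ∀ n, blockProj P n g ≠ 0)
    (D : Fin nh → ℝ) (hD : ∀ n, D n = g ⬝ᵥ blockProj P n g)
    (H : Matrix (Fin nh) (Fin nh) ℝ)
    (hH : ∀ n m', H n m' = blockProj P n g ⬝ᵥ A.mulVec (blockProj P m' g)) :
    D ⬝ᵥ H⁻¹.mulVec D ≥ (g ⬝ᵥ g) ^ 2 / (condNumber H * (g ⬝ᵥ A.mulVec g)) := by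
  classical
  rcases Nat.eq_zero_or_pos nh with h0 | hpos
  · subst h0
    have hm : m = 0 := by
      rcases Nat.eq_zero_or_pos m with h | h
      · exact h
      · exact (P ⟨0, h⟩).elim0
    subst hm
    simp [dotProduct]
  haveI : Nonempty (Fin nh) := ⟨⟨0, hpos⟩⟩
  -- g ≠ 0
  have hg0 : g ≠ 0 := by
    intro h
    apply hnz ⟨0, hpos⟩
    funext i
    simp [blockProj, h]
  have hgAg : 0 < g ⬝ᵥ A *ᵥ g := by
    have := hA.dotProduct_mulVec_pos hg0
    simpa using this
  -- the matrix B
  set B : Matrix (Fin m) (Fin nh) ℝ := Matrix.of fun i n => blockProj P n g i with hB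
  have hHB : H = Bᴴ * A * B := by
    ext n m'
    rw [hH]
    simp only [Matrix.mul_apply, Matrix.conjTranspose_apply, Matrix.of_apply, star_trivial,
      dotProduct, Matrix.mulVec, hB, Finset.sum_mul, Finset.mul_sum]
    rw [Finset.sum_comm]
    apply Finset.sum_congr rfl
    intro j _
    apply Finset.sum_congr rfl
    intro i _
    ring
  -- H is positive definite
  have hBv : ∀ v : Fin nh → ℝ, v ≠ 0 → B *ᵥ v ≠ 0 := by
    intro v hv
    obtain ⟨n, hn⟩ := Function.ne_iff.mp hv
    obtain ⟨i, hi⟩ := Function.ne_iff.mp (hnz n)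
    simp only [blockProj, Pi.zero_apply] at hi
    have hPi : P i = n ∧ g i ≠ 0 := by
      by_cases h : P i = n
      · exact ⟨h, by simpa [h] using hi⟩
      · simp [h] at hi
    intro hz
    have := congrFun hz i
    simp only [Matrix.mulVec, dotProduct, hB, Matrix.of_apply, blockProj, Pi.zero_apply,
      ite_mul, zero_mul] at this
    rw [Finset.sum_ite_eq Finset.univ (P i) (fun n => g i * v n)] at this
    simp [hPi.1] at this
    rcases this with h | h
    · exact hPi.2 h
    · exact hn h
  have hHpd : H.PosDef := by
    rw [hHB]
    refine Matrix.PosDef.of_dotProduct_mulVec_pos (hA.posSemidef.conjTranspose_mul_mul_same B).1 (fun v hv => ?_)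
    have := hA.dotProduct_mulVec_pos (hBv v hv)
    simpa only [star_mulVec, dotProduct_mulVec, vecMul_vecMul] using this
  -- sum of block projections is g
  have hsum : ∑ n, blockProj P n g = g := by
    funext i
    simp [blockProj, Finset.sum_apply, Finset.sum_ite_eq]
  have hBe : B *ᵥ (fun _ => (1 : ℝ)) = g := by
    funext i
    have h1 := congrFun hsum i
    simp only [Finset.sum_apply] at h1
    simpa [Matrix.mulVec, dotProduct, hB] using h1
  have heHe : (fun _ => (1 : ℝ)) ⬝ᵥ H *ᵥ (fun _ => (1 : ℝ)) = g ⬝ᵥ A *ᵥ g := by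
    rw [hHB]
    have h2 : star (fun _ => (1 : ℝ)) ⬝ᵥ (Bᴴ * A * B) *ᵥ (fun _ => (1 : ℝ))
        = star (B *ᵥ fun _ => (1 : ℝ)) ⬝ᵥ A *ᵥ (B *ᵥ fun _ => (1 : ℝ)) := by
      simp only [star_mulVec, dotProduct_mulVec, vecMul_vecMul]
    simp only [star_trivial] at h2
    rw [h2, hBe]
  have heD : (fun _ => (1 : ℝ)) ⬝ᵥ D = g ⬝ᵥ g := by
    simp only [dotProduct, one_mul, hD]
    rw [Finset.sum_comm]
    apply Finset.sum_congr rfl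
    intro i _
    rw [← Finset.mul_sum]
    congr 1
    have h1 := congrFun hsum i
    simpa [Finset.sum_apply] using h1
  -- the vector w
  set w : Fin nh → ℝ := H⁻¹ *ᵥ D with hw
  have hHw : H *ᵥ w = D := by
    rw [hw, mulVec_mulVec, Matrix.mul_nonsing_inv _ (isUnit_iff_ne_zero.mpr hHpd.det_pos.ne'),
      one_mulVec]
  have key := psd_cs hHpd.posSemidef (fun _ => (1 : ℝ)) w
  rw [hHw, heHe, heD] at key
  -- condition number ≥ 1
  have hHerm : H.IsHermitian := hHpd.1
  have hcond : condNumber H = (⨆ i, hHerm.eigenvalues i) / (⨅ i, hHerm.eigenvalues i) := by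
    simp only [condNumber]
    rw [dif_pos hHerm]
  have hinf : 0 < ⨅ i, hHerm.eigenvalues i := by
    obtain ⟨i, hi⟩ := exists_eq_ciInf_of_finite (f := hHerm.eigenvalues)
    rw [← hi]
    exact hHpd.eigenvalues_pos i
  have hsup : (⨅ i, hHerm.eigenvalues i) ≤ ⨆ i, hHerm.eigenvalues i :=
    le_trans (ciInf_le (Finite.bddBelow_range _) (Classical.arbitrary _))
      (le_ciSup (Finite.bddAbove_range _) (Classical.arbitrary _))
  have hκ : 1 ≤ condNumber H := by
    rw [hcond]
    exact (one_le_div hinf).mpr hsup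
  -- conclude
  have hDw : (g ⬝ᵥ g) ^ 2 / (g ⬝ᵥ A *ᵥ g) ≤ D ⬝ᵥ w := by
    rw [div_le_iff₀ hgAg]
    have hc : D ⬝ᵥ w = w ⬝ᵥ D := dotProduct_comm _ _
    nlinarith [key, hc]
  have hmono : (g ⬝ᵥ g) ^ 2 / (condNumber H * (g ⬝ᵥ A *ᵥ g))
      ≤ (g ⬝ᵥ g) ^ 2 / (g ⬝ᵥ A *ᵥ g) :=
    div_le_div_of_nonneg_left (sq_nonneg _) hgAg (le_mul_of_one_le_left hgAg.le hκ)
  exact le_trans hmono hDw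
end

section
/- Let A be an m×m real symmetric positive definite matrix, b ∈ ℝ^m, q(x) = ½xᵀAx − xᵀb, x ∈ ℝ^m, g = Ax − b, and let π₁,…,π_{n̂} be the block projections of a partition of {1,…,m} with π_n(g) ≠ 0 for all n. Let D_n = ⟨g, π_n(g)⟩, H_{n,m'} = ⟨π_n(g), A π_{m'}(g)⟩, Θ* = −H⁻¹D, and x⁺ = x + Σ_n θ*_n π_n(g). Then q(x) − q(x⁺) ≥ (1/(2κ(H))) · ‖g‖₂⁴ / ⟨g, Ag⟩, where κ(H) = λ_max(H)/λ_min(H). -/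
open Matrix

lemma dot_mulVec_comm' {k : ℕ} (M : Matrix (Fin k) (Fin k) ℝ) (hM : M.IsHermitian)
    (u w : Fin k → ℝ) : u ⬝ᵥ M.mulVec w = w ⬝ᵥ M.mulVec u := by
  rw [dotProduct_mulVec, ← Matrix.vecMul_transpose,
    show Mᵀ = M from (Matrix.conjTranspose_eq_transpose_of_trivial M).symm.trans hM.eq,
    dotProduct_comm]

lemma mulVec_sum_smul {k m : ℕ} (A : Matrix (Fin m) (Fin m) ℝ) (c : Fin k → ℝ)
    (v : Fin k → (Fin m → ℝ)) :
    A.mulVec (∑ n, c n • v n) = ∑ n, c n • A.mulVec (v n) := by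
  simp only [← Matrix.mulVecLin_apply, map_sum, _root_.map_smul]

lemma sum_dot {k m : ℕ} (f : Fin k → (Fin m → ℝ)) (w : Fin m → ℝ) :
    (∑ n, f n) ⬝ᵥ w = ∑ n, f n ⬝ᵥ w := by
  simp only [dotProduct, Finset.sum_apply, Finset.sum_mul]
  exact Finset.sum_comm

lemma dot_sum {k m : ℕ} (w : Fin m → ℝ) (f : Fin k → (Fin m → ℝ)) :
    w ⬝ᵥ (∑ n, f n) = ∑ n, w ⬝ᵥ f n := by
  simp only [dotProduct, Finset.sum_apply, Finset.mul_sum]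
  exact Finset.sum_comm

lemma dot_sum_smul_right {k m : ℕ} (A : Matrix (Fin m) (Fin m) ℝ) (u : Fin m → ℝ)
    (c : Fin k → ℝ) (v : Fin k → (Fin m → ℝ)) :
    u ⬝ᵥ A.mulVec (∑ n, c n • v n) = ∑ n, c n * (u ⬝ᵥ A.mulVec (v n)) := by
  rw [mulVec_sum_smul, dot_sum]
  simp [dotProduct_smul, smul_eq_mul]

lemma dot_bilinear {k m : ℕ} (A : Matrix (Fin m) (Fin m) ℝ)
    (c e : Fin k → ℝ) (v : Fin k → (Fin m → ℝ)) :
    (∑ n, c n • v n) ⬝ᵥ A.mulVec (∑ n, e n • v n)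
      = ∑ n, ∑ m', c n * e m' * (v n ⬝ᵥ A.mulVec (v m')) := by
  rw [sum_dot]
  refine Finset.sum_congr rfl fun n _ => ?_
  rw [smul_dotProduct, dot_sum_smul_right]
  simp [Finset.mul_sum, smul_eq_mul]; ring_nf

lemma dot_mulVec_eq {k : ℕ} (H : Matrix (Fin k) (Fin k) ℝ) (c e : Fin k → ℝ) :
    c ⬝ᵥ H.mulVec e = ∑ n, ∑ m', c n * e m' * H n m' := by
  simp [Matrix.mulVec, dotProduct, Finset.mul_sum]
  exact Finset.sum_congr rfl fun n _ => Finset.sum_congr rfl fun m' _ => by ring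

lemma quad_expand {m : ℕ} (A : Matrix (Fin m) (Fin m) ℝ) (hA : A.IsHermitian)
    (b x d : Fin m → ℝ) :
    quadForm A b (x + d)
      = quadForm A b x + d ⬝ᵥ (A.mulVec x - b) + (1/2) * (d ⬝ᵥ A.mulVec d) := by
  simp only [quadForm, Matrix.mulVec_add, dotProduct_add, add_dotProduct,
    dotProduct_sub]
  rw [dot_mulVec_comm' A hA x d]
  ring

/-- Per-step decrease bound `q(x) − q(x⁺) ≥ (1/(2κ(H))) ‖g‖₂⁴ / ⟨g, A g⟩` for the enhanced
steepest-descent update `x⁺ = x + Σₙ θ*ₙ πₙ(g)` with `Θ* = −H⁻¹ D`. -/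
theorem stmt_6 {m nh : ℕ} (A : Matrix (Fin m) (Fin m) ℝ) (hA : A.PosDef)
    (b x : Fin m → ℝ)
    (P : Fin m → Fin nh) (hP : Function.Surjective P)
    (g : Fin m → ℝ) (hg : g = A.mulVec x - b)
    (hnz : ∀ n, blockProj P n g ≠ 0)
    (D : Fin nh → ℝ) (hD : ∀ n, D n = g ⬝ᵥ blockProj P n g)
    (H : Matrix (Fin nh) (Fin nh) ℝ)
    (hH : ∀ n m', H n m' = blockProj P n g ⬝ᵥ A.mulVec (blockProj P m' g))
    (Θs : Fin nh → ℝ) (hΘs : Θs = -(H⁻¹.mulVec D))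
    (xp : Fin m → ℝ) (hxp : xp = x + ∑ n, Θs n • blockProj P n g) :
    quadForm A b x - quadForm A b xp
      ≥ (1 / (2 * condNumber H)) * ((g ⬝ᵥ g) ^ 2 / (g ⬝ᵥ A.mulVec g)) := by
  classical
  set v : Fin nh → (Fin m → ℝ) := fun n => blockProj P n g with hv
  have hsum : ∑ n, v n = g := by
    funext i
    simp [hv, blockProj, Finset.sum_apply, Finset.sum_ite_eq]
  by_cases hnh : nh = 0
  · subst hnh
    have hm : m = 0 := by
      by_contra hm
      exact (P ⟨0, Nat.pos_of_ne_zero hm⟩).elim0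
    subst hm
    have h1 : ∀ y : Fin 0 → ℝ, quadForm A b y = 0 := by
      intro y; simp [quadForm, dotProduct]
    have h2 : condNumber H = 0 := by
      rw [condNumber]
      split
      · rw [Real.iSup_of_isEmpty, Real.iInf_of_isEmpty]
        simp
      · rfl
    rw [h1, h1, h2]
    norm_num
  -- main case
  have hAH := hA.isHermitian
  have hg0 : g ≠ 0 := by
    obtain ⟨i, hi⟩ := Function.ne_iff.mp (hnz ⟨0, Nat.pos_of_ne_zero hnh⟩)
    intro h; subst h
    exact hi (by simp [blockProj])
  have hgAg : 0 < g ⬝ᵥ A.mulVec g := by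
    simpa using hA.dotProduct_mulVec_pos hg0
  have hHsymm : H.IsHermitian := by
    show Hᴴ = H
    ext i j
    simp only [Matrix.conjTranspose_apply, star_trivial]
    rw [hH, hH, dot_mulVec_comm' A hAH]
  have key_quad : ∀ c : Fin nh → ℝ,
      c ⬝ᵥ H.mulVec c = (∑ n, c n • v n) ⬝ᵥ A.mulVec (∑ n, c n • v n) := by
    intro c
    rw [dot_bilinear, dot_mulVec_eq]
    exact Finset.sum_congr rfl fun n _ => Finset.sum_congr rfl fun m' _ => by rw [hH]
  have hw_ne : ∀ c : Fin nh → ℝ, c ≠ 0 → (∑ n, c n • v n) ≠ 0 := by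
    intro c hc h0
    apply hc
    funext n
    obtain ⟨i, hi⟩ := Function.ne_iff.mp (hnz n)
    have hPi : P i = n := by
      by_contra h; exact hi (by simp [blockProj, h])
    have hgi : g i ≠ 0 := by
      intro h; exact hi (by simp [blockProj, h])
    have h3 := congrFun h0 i
    simp only [Finset.sum_apply, Pi.smul_apply, smul_eq_mul, Pi.zero_apply] at h3
    have h4 : ∑ n', c n' * v n' i = c (P i) * g i := by
      simp [hv, blockProj, mul_ite, Finset.sum_ite_eq]
    rw [h4] at h3
    have := mul_eq_zero.mp h3
    rcases this with h5 | h5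
    · rw [← hPi]; exact h5
    · exact absurd h5 hgi
  have hHpd : H.PosDef := by
    refine Matrix.PosDef.of_dotProduct_mulVec_pos hHsymm fun c hc => ?_
    have h1 : star c ⬝ᵥ H.mulVec c = c ⬝ᵥ H.mulVec c := by simp
    rw [h1, key_quad c]
    simpa using hA.dotProduct_mulVec_pos (hw_ne c hc)
  have hHdet : IsUnit H.det := hHpd.det_pos.ne'.isUnit
  have hHinv : H * H⁻¹ = 1 := Matrix.mul_nonsing_inv H hHdet
  have hHmul : ∀ u : Fin nh → ℝ, H.mulVec (H⁻¹.mulVec u) = u := by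
    intro u; rw [Matrix.mulVec_mulVec, hHinv, Matrix.one_mulVec]
  set w : Fin nh → ℝ := H⁻¹.mulVec D with hw
  set s : ℝ := D ⬝ᵥ w with hs
  have hHw : H.mulVec w = D := hHmul D
  have hvg : ∀ n, v n ⬝ᵥ g = D n := fun n => by rw [hD, dotProduct_comm]
  have hΔg : (∑ n, Θs n • v n) ⬝ᵥ g = -s := by
    rw [sum_dot]
    simp only [smul_dotProduct, smul_eq_mul, hvg]
    rw [show (∑ n, Θs n * D n) = Θs ⬝ᵥ D from rfl, hΘs]
    rw [neg_dotProduct, dotProduct_comm, ← hs]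
  have hΔAΔ : (∑ n, Θs n • v n) ⬝ᵥ A.mulVec (∑ n, Θs n • v n) = s := by
    rw [← key_quad Θs, hΘs]
    simp only [neg_dotProduct, Matrix.mulVec_neg, dotProduct_neg, neg_neg]
    rw [hHw, dotProduct_comm, ← hs]
  have hexp : quadForm A b x - quadForm A b xp = (1/2) * s := by
    rw [hxp, quad_expand A hAH, ← hg, hΔg, hΔAΔ]
    ring
  set one : Fin nh → ℝ := fun _ => 1 with hone
  have hone_sum : (∑ n, one n • v n) = g := by
    rw [← hsum]; exact Finset.sum_congr rfl fun n _ => one_smul _ _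
  have hgg : g ⬝ᵥ g = ∑ n, D n := by
    nth_rewrite 2 [← hsum]
    rw [dot_sum]
    exact Finset.sum_congr rfl fun n _ => (hD n).symm
  have hc1 : one ⬝ᵥ H.mulVec one = g ⬝ᵥ A.mulVec g := by
    rw [key_quad one, hone_sum]
  have hb1 : one ⬝ᵥ H.mulVec w = ∑ n, D n := by
    rw [hHw]; simp [hone, dotProduct]
  have hb2 : w ⬝ᵥ H.mulVec one = ∑ n, D n := by
    rw [dot_mulVec_comm' H hHsymm, hb1]
  have ha1 : w ⬝ᵥ H.mulVec w = s := by
    rw [hHw, dotProduct_comm, ← hs]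
  have hquad : ∀ t : ℝ, 0 ≤ s * (t * t) + (2 * ∑ n, D n) * t + g ⬝ᵥ A.mulVec g := by
    intro t
    have h0 : 0 ≤ (one + t • w) ⬝ᵥ H.mulVec (one + t • w) := by
      simpa using hHpd.posSemidef.dotProduct_mulVec_nonneg (one + t • w)
    have hexp2 : (one + t • w) ⬝ᵥ H.mulVec (one + t • w)
        = s * (t*t) + (2 * ∑ n, D n) * t + g ⬝ᵥ A.mulVec g := by
      simp only [Matrix.mulVec_add, Matrix.mulVec_smul, dotProduct_add,
        add_dotProduct, dotProduct_smul, smul_dotProduct, smul_eq_mul]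
      rw [ha1, hb1, hb2, hc1]
      ring
    rw [hexp2] at h0
    exact h0
  have hCS : (∑ n, D n)^2 ≤ s * (g ⬝ᵥ A.mulVec g) := by
    have hd := discrim_le_zero hquad
    rw [discrim] at hd
    nlinarith [hd]
  have hκ : 1 ≤ condNumber H := by
    rw [condNumber, dif_pos hHsymm]
    have hpos : ∀ i, 0 < hHsymm.eigenvalues i := fun i => hHpd.eigenvalues_pos i
    have hne : Nonempty (Fin nh) := ⟨⟨0, Nat.pos_of_ne_zero hnh⟩⟩
    obtain ⟨i0, hi0⟩ := Finite.exists_min hHsymm.eigenvalues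
    have hinf : (⨅ i, hHsymm.eigenvalues i) = hHsymm.eigenvalues i0 :=
      le_antisymm (ciInf_le (Finite.bddBelow_range _) i0) (le_ciInf hi0)
    rw [hinf, le_div_iff₀ (hpos i0), one_mul]
    exact le_ciSup (Finite.bddAbove_range _) i0
  have hκpos : 0 < condNumber H := lt_of_lt_of_le one_pos hκ
  rw [ge_iff_le, hexp]
  have hgg2 : (g ⬝ᵥ g)^2 / (g ⬝ᵥ A.mulVec g) ≤ s := by
    rw [div_le_iff₀ hgAg, hgg]
    exact hCS
  have hnonneg : 0 ≤ (g ⬝ᵥ g)^2 / (g ⬝ᵥ A.mulVec g) := div_nonneg (sq_nonneg _) hgAg.le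
  have h12 : 1 / (2 * condNumber H) ≤ 1/2 := by
    apply one_div_le_one_div_of_le <;> linarith
  calc (1 / (2 * condNumber H)) * ((g ⬝ᵥ g) ^ 2 / (g ⬝ᵥ A.mulVec g))
      ≤ (1/2) * ((g ⬝ᵥ g) ^ 2 / (g ⬝ᵥ A.mulVec g)) :=
        mul_le_mul_of_nonneg_right h12 hnonneg
    _ ≤ (1/2) * s := by linarith
end

section
/- (Kantorovich matrix inequality) Let A be an m×m real symmetric positive definite matrix with smallest eigenvalue λ_min and largest eigenvalue λ_max. Then for every d ∈ ℝ^m, (dᵀAd)·(dᵀA⁻¹d) ≤ ((λ_max + λ_min)² / (4 λ_max λ_min)) · (dᵀd)². -/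
open Matrix

lemma kant_sum {n : ℕ} (μ w : Fin n → ℝ) (a b : ℝ) (ha : 0 < a) (hab : a ≤ b)
    (hw : ∀ i, 0 ≤ w i) (h1 : ∀ i, a ≤ μ i) (h2 : ∀ i, μ i ≤ b) :
    (∑ i, μ i * w i) * (∑ i, (μ i)⁻¹ * w i)
      ≤ (b + a) ^ 2 / (4 * b * a) * (∑ i, w i) ^ 2 := by
  set S1 := ∑ i, μ i * w i with hS1
  set S2 := ∑ i, (μ i)⁻¹ * w i with hS2
  set S := ∑ i, w i with hS
  have hb : 0 < b := lt_of_lt_of_le ha hab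
  have hkey : S1 + a * b * S2 ≤ (a + b) * S := by
    rw [hS1, hS2, hS, Finset.mul_sum, Finset.mul_sum, ← Finset.sum_add_distrib]
    refine Finset.sum_le_sum fun i _ => ?_
    have hμ : 0 < μ i := lt_of_lt_of_le ha (h1 i)
    have h3 : μ i + a * b / μ i ≤ a + b := by
      have h4 : a * b / μ i ≤ a + b - μ i := (div_le_iff₀ hμ).2 (by
        nlinarith [mul_nonneg (sub_nonneg.2 (h1 i)) (sub_nonneg.2 (h2 i))])
      linarith
    calc μ i * w i + a * b * ((μ i)⁻¹ * w i) = (μ i + a * b / μ i) * w i := by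
          field_simp
      _ ≤ (a + b) * w i := mul_le_mul_of_nonneg_right h3 (hw i)
  have hS1n : 0 ≤ S1 := Finset.sum_nonneg fun i _ =>
    mul_nonneg (le_of_lt (lt_of_lt_of_le ha (h1 i))) (hw i)
  have hS2n : 0 ≤ S2 := Finset.sum_nonneg fun i _ =>
    mul_nonneg (inv_nonneg.2 (le_of_lt (lt_of_lt_of_le ha (h1 i)))) (hw i)
  rw [div_mul_eq_mul_div, le_div_iff₀ (by positivity)]
  nlinarith [sq_nonneg (S1 - a * b * S2), sq_nonneg ((a + b) * S), mul_nonneg hS1n hS2n,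
    mul_le_mul_of_nonneg_left hkey (le_of_lt (mul_pos ha hb))]

/-- Kantorovich matrix inequality: if `A` is an `m×m` real SPD matrix with smallest
eigenvalue `λ_min` and largest eigenvalue `λ_max`, then for every `d ∈ ℝ^m`,
`(dᵀAd)(dᵀA⁻¹d) ≤ ((λ_max + λ_min)²/(4 λ_max λ_min)) (dᵀd)²`. -/
theorem stmt_11 {m : ℕ} (A : Matrix (Fin m) (Fin m) ℝ) (hA : A.PosDef)
    (lmin lmax : ℝ)
    (hmin : lmin = ⨅ i, hA.1.eigenvalues i)
    (hmax : lmax = ⨆ i, hA.1.eigenvalues i) :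
    ∀ d : Fin m → ℝ,
      (d ⬝ᵥ A.mulVec d) * (d ⬝ᵥ A⁻¹.mulVec d)
        ≤ ((lmax + lmin) ^ 2 / (4 * lmax * lmin)) * (d ⬝ᵥ d) ^ 2 := by
  intro d
  rcases Nat.eq_zero_or_pos m with hm | hm
  · subst hm
    simp [dotProduct]
  haveI : Nonempty (Fin m) := ⟨⟨0, hm⟩⟩
  set μ := hA.1.eigenvalues with hμ
  -- bounds
  have hbdd_below : BddBelow (Set.range μ) := (Set.finite_range μ).bddBelow
  have hbdd_above : BddAbove (Set.range μ) := (Set.finite_range μ).bddAbove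
  have hmin_le : ∀ i, lmin ≤ μ i := fun i => hmin ▸ ciInf_le hbdd_below i
  have hle_max : ∀ i, μ i ≤ lmax := fun i => hmax ▸ le_ciSup hbdd_above i
  have hlmin_pos : 0 < lmin := by
    obtain ⟨i, hi⟩ := exists_eq_ciInf_of_finite (f := μ)
    rw [hmin, ← hi]; exact hA.eigenvalues_pos i
  have hminmax : lmin ≤ lmax := le_trans (hmin_le (Classical.arbitrary _)) (hle_max _)
  -- spectral decomposition
  set U : Matrix (Fin m) (Fin m) ℝ := (hA.1.eigenvectorUnitary : Matrix (Fin m) (Fin m) ℝ) with hU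
  have hUU : U * star U = 1 := (Matrix.mem_unitaryGroup_iff).mp hA.1.eigenvectorUnitary.2
  have hUU' : star U * U = 1 := (Matrix.mem_unitaryGroup_iff').mp hA.1.eigenvectorUnitary.2
  have hspec : A = U * diagonal μ * star U := by
    have := hA.1.spectral_theorem
    simpa using this
  set c : Fin m → ℝ := star U *ᵥ d with hc
  have hμne : ∀ i, μ i ≠ 0 := fun i => ne_of_gt (lt_of_lt_of_le hlmin_pos (hmin_le i))
  have hinv : A⁻¹ = U * diagonal (fun i => (μ i)⁻¹) * star U := by
    apply Matrix.inv_eq_right_inv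
    rw [hspec]
    calc U * diagonal μ * star U * (U * diagonal (fun i => (μ i)⁻¹) * star U)
        = U * (diagonal μ * (star U * U) * diagonal (fun i => (μ i)⁻¹)) * star U := by
          noncomm_ring
      _ = 1 := by
          rw [hUU', mul_one, diagonal_mul_diagonal]
          have hd1 : (diagonal fun i => μ i * (μ i)⁻¹) = (1 : Matrix (Fin m) (Fin m) ℝ) := by
            have he : (fun i => μ i * (μ i)⁻¹) = fun _ : Fin m => (1 : ℝ) :=
              funext fun i => mul_inv_cancel₀ (hμne i)
            rw [he, diagonal_one]
          rw [hd1, mul_one, hUU]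
  have key : ∀ (D : Fin m → ℝ), d ⬝ᵥ (U * diagonal D * star U) *ᵥ d = ∑ i, D i * (c i) ^ 2 := by
    intro D
    rw [← mulVec_mulVec, ← mulVec_mulVec, dotProduct_mulVec d U, ← mulVec_transpose]
    have : Uᵀ *ᵥ d = c := by
      rw [hc, Matrix.star_eq_conjTranspose, conjTranspose_eq_transpose_of_trivial]
    rw [this]
    simp [mulVec_diagonal, dotProduct, mul_comm, sq, mul_assoc, mul_left_comm]
    rw [← hc]
  have hAd : d ⬝ᵥ A *ᵥ d = ∑ i, μ i * (c i) ^ 2 := by rw [hspec]; exact key μ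
  have hAinvd : d ⬝ᵥ A⁻¹ *ᵥ d = ∑ i, (μ i)⁻¹ * (c i) ^ 2 := by rw [hinv]; exact key _
  have hdd : d ⬝ᵥ d = ∑ i, (c i) ^ 2 := by
    have : d ⬝ᵥ d = d ⬝ᵥ (U * diagonal (fun _ => 1) * star U) *ᵥ d := by
      simp [diagonal_one, hUU]
    rw [this, key]; simp
  rw [hAd, hAinvd, hdd]
  have := kant_sum μ (fun i => (c i) ^ 2) lmin lmax hlmin_pos hminmax
    (fun i => sq_nonneg _) hmin_le hle_max
  simpa [mul_comm lmax lmin] using this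
end

section
/- (Scalar Kantorovich inequality) Let n̂ ≥ 1, let α₁,…,α_{n̂} ≥ 0 with Σ_{n=1}^{n̂} α_n = 1, and let λ₁,…,λ_{n̂} > 0 with λ_min = min_n λ_n and λ_max = max_n λ_n. Then (Σ_{n=1}^{n̂} α_n λ_n) · (Σ_{n=1}^{n̂} α_n/λ_n) ≤ (λ_max + λ_min)² / (4 λ_max λ_min). -/
/-- Scalar Kantorovich inequality: for nonnegative weights `α` summing to `1` and positive
reals `λₙ` with minimum `λ_min` and maximum `λ_max`,
`(Σ αₙ λₙ)(Σ αₙ/λₙ) ≤ (λ_max + λ_min)²/(4 λ_max λ_min)`. -/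
theorem stmt_12 {nh : ℕ} (hnh : 1 ≤ nh)
    (α lam : Fin nh → ℝ)
    (hα : ∀ n, 0 ≤ α n) (hsum : ∑ n, α n = 1)
    (hlam : ∀ n, 0 < lam n)
    (lmin lmax : ℝ)
    (hmin : IsLeast (Set.range lam) lmin)
    (hmax : IsGreatest (Set.range lam) lmax) :
    (∑ n, α n * lam n) * (∑ n, α n / lam n)
      ≤ (lmax + lmin) ^ 2 / (4 * lmax * lmin) := by
  obtain ⟨⟨i, hi⟩, hlb⟩ := hmin
  obtain ⟨⟨j, hj⟩, hub⟩ := hmax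
  have hminpos : 0 < lmin := hi ▸ hlam i
  have hmaxpos : 0 < lmax := hj ▸ hlam j
  set S := ∑ n, α n * lam n with hS
  set T := ∑ n, α n / lam n with hT
  have hS0 : 0 ≤ S := Finset.sum_nonneg fun n _ =>
    mul_nonneg (hα n) (hlam n).le
  have hT0 : 0 ≤ T := Finset.sum_nonneg fun n _ =>
    div_nonneg (hα n) (hlam n).le
  have key : S + lmin * lmax * T ≤ lmin + lmax := by
    have : ∑ n, (α n * lam n + lmin * lmax * (α n / lam n))
        ≤ ∑ n, α n * (lmin + lmax) := by
      apply Finset.sum_le_sum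
      intro n _
      have h1 : lmin ≤ lam n := hlb ⟨n, rfl⟩
      have h2 : lam n ≤ lmax := hub ⟨n, rfl⟩
      have hln := hlam n
      have hfac : 0 ≤ (lam n - lmin) * (lmax - lam n) :=
        mul_nonneg (by linarith) (by linarith)
      have hdiv : lmin * lmax / lam n ≤ lmin + lmax - lam n := by
        rw [div_le_iff₀ hln]; nlinarith
      have h3 : lam n + lmin * lmax / lam n ≤ lmin + lmax := by linarith
      have h4 := mul_le_mul_of_nonneg_left h3 (hα n)
      have h5 : α n * lam n + lmin * lmax * (α n / lam n)
          = α n * (lam n + lmin * lmax / lam n) := by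
        field_simp
      linarith [h4, h5.le, h5.ge]
    calc S + lmin * lmax * T
        = ∑ n, (α n * lam n + lmin * lmax * (α n / lam n)) := by
          rw [hS, hT, Finset.mul_sum, ← Finset.sum_add_distrib]
      _ ≤ ∑ n, α n * (lmin + lmax) := this
      _ = lmin + lmax := by rw [← Finset.sum_mul, hsum, one_mul]
  have hPT : 0 ≤ lmin * lmax * T :=
    mul_nonneg (mul_nonneg hminpos.le hmaxpos.le) hT0
  have hprod : S * (lmin * lmax * T) ≤ ((lmin + lmax) / 2) ^ 2 := by
    nlinarith [sq_nonneg (S - lmin * lmax * T), key, hS0, hPT,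
      mul_nonneg (by linarith : (0:ℝ) ≤ lmin + lmax - (S + lmin * lmax * T))
        (by linarith : (0:ℝ) ≤ lmin + lmax + (S + lmin * lmax * T))]
  rw [le_div_iff₀ (by positivity : (0:ℝ) < 4 * lmax * lmin)]
  nlinarith [hprod]
end
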